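/- Let G and H be finite groups. There exists an orthogonal pair (X,Y) of finite bifree (G,H)-bisets if and only if G and H are isomorphic as groups. (Equivalently: B°^Δ(G,H) is non-empty if and only if G ≅ H.) -/

import Mathlib

open MulAction

/-- An isomorphism of `M`-sets: an equivariant bijection. -/
def IsoAsGSets (M X Y : Type*) [SMul M X] [SMul M Y] : Prop :=
  ∃ e : X ≃ Y, ∀ (m : M) (x : X), e (m • x) = m • e x

/-- The twisted diagonal subgroup `Δ(R,α,S) = {(α s, s) | s ∈ S}` of `G × H`,
for an isomorphism `α : S ≃* R`. -/
def twistedDiagonal {G H : Type*} [Group G] [Group H] (R : Subgroup G) (S : Subgroup H)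
    (α : S ≃* R) : Subgroup (G × H) :=
  ((R.subtype.comp α.toMonoidHom).prod S.subtype).range

/-- `Δ(G,φ,H) = {(φ h, h) | h ∈ H} ≤ G × H` for an isomorphism `φ : H ≃* G`. -/
def fullTwistedDiagonal {G H : Type*} [Group G] [Group H] (φ : H ≃* G) : Subgroup (G × H) :=
  (φ.toMonoidHom.prod (MonoidHom.id H)).range

/-- The diagonal subgroup `Δ(R) = {(r,r) | r ∈ R} ≤ G × G`. -/
def diagSubgroup {G : Type*} [Group G] (R : Subgroup G) : Subgroup (G × G) :=
  (R.subtype.prod R.subtype).range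

/-- A `(G,H)`-biset (i.e. a left `(G × H)`-set) is bifree if it is free as a left `G`-set
and free as a right `H`-set. -/
def IsBifree (G H X : Type*) [Group G] [Group H] [MulAction (G × H) X] : Prop :=
  (∀ (g : G) (x : X), (g, (1 : H)) • x = x → g = 1) ∧
  (∀ (h : H) (x : X), ((1 : G), h) • x = x → h = 1)

section Tensor

variable (G H K : Type*) [Group G] [Group H] [Group K]
variable (X Y : Type*) [MulAction (G × H) X] [MulAction (H × K) Y]

/-- The relation on `X × Y` identifying `(x·h, y)` with `(x, h·y)`. -/
def bisetSetoid : Setoid (X × Y) where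
  r p q := ∃ h : H, q.1 = ((1 : G), h) • p.1 ∧ q.2 = (h, (1 : K)) • p.2
  iseqv := by
    constructor
    · intro p
      exact ⟨1, by simp [Prod.mk_one_one], by simp [Prod.mk_one_one]⟩
    · rintro p q ⟨h, h1, h2⟩
      exact ⟨h⁻¹, by simp [h1, smul_smul, Prod.mk_one_one], by simp [h2, smul_smul, Prod.mk_one_one]⟩
    · rintro p q r ⟨h, h1, h2⟩ ⟨h', h1', h2'⟩
      exact ⟨h' * h, by simp [h1, h1', smul_smul], by simp [h2, h2', smul_smul]⟩

/-- The tensor product `X ×_H Y` of a `(G,H)`-biset and an `(H,K)`-biset;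
a `(G,K)`-biset. -/
def BisetTensor : Type _ :=
  Quotient (bisetSetoid G H K X Y)

variable {G H K X Y}

/-- The class of `(x, y)` in `X ×_H Y`. -/
def BisetTensor.mk (p : X × Y) : BisetTensor G H K X Y :=
  Quotient.mk (bisetSetoid G H K X Y) p

variable (G H K X Y)

instance : SMul (G × K) (BisetTensor G H K X Y) :=
  ⟨fun a => Quotient.map (fun p => ((a.1, (1 : H)) • p.1, ((1 : H), a.2) • p.2))
    (by
      rintro p q ⟨h, h1, h2⟩
      exact ⟨h, by simp [h1, smul_smul], by simp [h2, smul_smul]⟩)⟩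

variable {G H K X Y}

theorem BisetTensor.smul_mk (a : G × K) (p : X × Y) :
    a • (BisetTensor.mk p : BisetTensor G H K X Y) =
      BisetTensor.mk ((a.1, (1 : H)) • p.1, ((1 : H), a.2) • p.2) :=
  rfl

variable (G H K X Y)

instance : MulAction (G × K) (BisetTensor G H K X Y) where
  one_smul q := Quotient.inductionOn q fun p => by
    refine Quotient.sound ⟨1, ?_, ?_⟩ <;> simp [Prod.mk_one_one]
  mul_smul a b q := Quotient.inductionOn q fun p => by
    refine Quotient.sound ⟨1, ?_, ?_⟩ <;> simp [smul_smul]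

end Tensor

section Op

/-- The opposite biset: a `(G,H)`-biset viewed as an `(H,G)`-biset via
`h · x · g := g⁻¹ · x · h⁻¹`. -/
def BisetOp (H G X : Type*) : Type _ := (fun _ _ => X) H G

instance BisetOp.instMulAction {G H : Type*} [Group G] [Group H] (X : Type*)
    [MulAction (G × H) X] : MulAction (H × G) (BisetOp H G X) :=
  MulAction.compHom X (MulEquiv.prodComm : H × G ≃* G × H).toMonoidHom

instance BisetOp.instFinite {G H : Type*} (X : Type*) [Finite X] : Finite (BisetOp H G X) :=
  inferInstanceAs (Finite X)

end Op

section Grp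

/-- The group `G` viewed as a `(G,G)`-biset via left and right multiplication. -/
structure BisetGrp (G : Type*) where
  /-- the underlying group element -/
  val : G

instance BisetGrp.instSMul {G : Type*} [Group G] : SMul (G × G) (BisetGrp G) :=
  ⟨fun p x => ⟨p.1 * x.val * p.2⁻¹⟩⟩

theorem BisetGrp.smul_def {G : Type*} [Group G] (p : G × G) (x : BisetGrp G) :
    p • x = ⟨p.1 * x.val * p.2⁻¹⟩ := rfl

instance BisetGrp.instMulAction {G : Type*} [Group G] : MulAction (G × G) (BisetGrp G) where
  one_smul x := by
    cases x
    simp [BisetGrp.smul_def]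
  mul_smul p q x := by
    cases x
    simp [BisetGrp.smul_def, mul_assoc]

instance BisetGrp.instFinite {G : Type*} [Finite G] : Finite (BisetGrp G) :=
  Finite.of_equiv G ⟨fun g => ⟨g⟩, fun x => x.val, fun _ => rfl, fun _ => rfl⟩

end Grp

/-- A pair `(X,Y)` of `(G,H)`-bisets is an orthogonal pair if
`(X ×_H X°) ⊔ (Y ×_H Y°) ≅ G ⊔ (X ×_H Y°) ⊔ (Y ×_H X°)` as `(G,G)`-bisets;
this encodes the equation `([X] - [Y]) ·_H ([X] - [Y])° = [G]` in `B^Δ(G,G)`. -/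
def IsOrthogonalPair (G H : Type*) [Group G] [Group H] (X Y : Type*)
    [MulAction (G × H) X] [MulAction (G × H) Y] : Prop :=
  IsoAsGSets (G × G)
    (BisetTensor G H G X (BisetOp H G X) ⊕ BisetTensor G H G Y (BisetOp H G Y))
    (BisetGrp G ⊕ (BisetTensor G H G X (BisetOp H G Y) ⊕ BisetTensor G H G Y (BisetOp H G X)))

section Iota

/-- For a `G`-set `Z`, the `(G,G)`-biset `ι(Z) = G × Z` with action
`(g₁,g₂) • (g,z) = (g₁ g g₂⁻¹, g₂ • z)`. -/
structure IotaBiset (G Z : Type*) where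
  /-- the group component -/
  fst : G
  /-- the `G`-set component -/
  snd : Z

instance IotaBiset.instSMul {G Z : Type*} [Group G] [MulAction G Z] :
    SMul (G × G) (IotaBiset G Z) :=
  ⟨fun p x => ⟨p.1 * x.fst * p.2⁻¹, p.2 • x.snd⟩⟩

theorem IotaBiset.smul_def {G Z : Type*} [Group G] [MulAction G Z] (p : G × G)
    (x : IotaBiset G Z) : p • x = ⟨p.1 * x.fst * p.2⁻¹, p.2 • x.snd⟩ := rfl

instance IotaBiset.instMulAction {G Z : Type*} [Group G] [MulAction G Z] :
    MulAction (G × G) (IotaBiset G Z) where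
  one_smul x := by
    cases x
    simp [IotaBiset.smul_def]
  mul_smul p q x := by
    cases x
    simp [IotaBiset.smul_def, mul_assoc, mul_smul]

instance IotaBiset.instFinite {G Z : Type*} [Finite G] [Finite Z] : Finite (IotaBiset G Z) :=
  Finite.of_equiv (G × Z) ⟨fun p => ⟨p.1, p.2⟩, fun x => (x.fst, x.snd), fun _ => rfl,
    fun _ => rfl⟩

end Iota

/-- An orthogonal pair of finite bifree `(G,H)`-bisets, encoding an element
`γ = [X] - [Y]` of `B^Δ(G,H)` with `γ ·_H γ° = [G]`. -/
structure OrthPair (G H : Type) [Group G] [Group H] : Type 1 where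
  /-- the first biset -/
  X : Type
  /-- the second biset -/
  Y : Type
  [actX : MulAction (G × H) X]
  [actY : MulAction (G × H) Y]
  [finX : Finite X]
  [finY : Finite Y]
  bifreeX : IsBifree G H X
  bifreeY : IsBifree G H Y
  orth : IsOrthogonalPair G H X Y

attribute [instance] OrthPair.actX OrthPair.actY OrthPair.finX OrthPair.finY
/-! ### Auxiliary material for the proof -/

section AuxProof

instance BisetTensor.instFinite {G H K X Y : Type*} [Group G] [Group H] [Group K]
    [MulAction (G × H) X] [MulAction (H × K) Y] [Finite X] [Finite Y] :
    Finite (BisetTensor G H K X Y) :=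
  Quotient.finite _

instance Empty.instMulActionAux (M : Type*) [Monoid M] : MulAction M Empty where
  smul _ e := e.elim
  one_smul e := e.elim
  mul_smul _ _ e := e.elim

/-- Cardinality of the tensor product: if `X` is right-`H`-free then
`|X| * |Y| = |X ×_H Y| * |H|`. -/
theorem tensor_card {G H K : Type*} [Group G] [Group H] [Group K]
    {X Y : Type*} [MulAction (G × H) X] [MulAction (H × K) Y] [Finite X] [Finite Y]
    (hfree : ∀ (h : H) (x : X), ((1 : G), h) • x = x → h = 1) :
    Nat.card X * Nat.card Y = Nat.card (BisetTensor G H K X Y) * Nat.card H := by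
  classical
  have hF : ∀ t : BisetTensor G H K X Y, Function.Bijective
      (fun h : H => (⟨(((1 : G), h) • (Quotient.out t).1, (h, (1 : K)) • (Quotient.out t).2),
        by
          have h1 : BisetTensor.mk (Quotient.out t) = t := Quotient.out_eq t
          have h2 : BisetTensor.mk (Quotient.out t) =
              BisetTensor.mk (((1 : G), h) • (Quotient.out t).1,
                (h, (1 : K)) • (Quotient.out t).2) :=
            Quotient.sound ⟨h, rfl, rfl⟩
          exact h2.symm.trans h1⟩ :
        {p : X × Y // BisetTensor.mk p = t})) := by
    intro t
    constructor
    · intro h₁ h₂ hh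
      have h3 : ((1 : G), h₁) • (Quotient.out t).1 = ((1 : G), h₂) • (Quotient.out t).1 :=
        congrArg (fun q : X × Y => q.1) (congrArg Subtype.val hh)
      have h4 : ((1 : G), h₂⁻¹ * h₁) • (Quotient.out t).1 = (Quotient.out t).1 := by
        have := congrArg (fun z => (((1 : G), h₂⁻¹) : G × H) • z) h3
        simpa [smul_smul, Prod.mk_mul_mk, Prod.mk_one_one] using this
      have := hfree _ _ h4
      rwa [inv_mul_eq_one, eq_comm] at this
    · rintro ⟨p, hp⟩
      have h5 : BisetTensor.mk p = BisetTensor.mk (Quotient.out t) :=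
        hp.trans (Quotient.out_eq t).symm
      have h6 := (bisetSetoid G H K X Y).symm (Quotient.exact h5)
      obtain ⟨h, hh1, hh2⟩ := h6
      exact ⟨h, Subtype.ext (Prod.ext hh1.symm hh2.symm)⟩
  calc Nat.card X * Nat.card Y = Nat.card (X × Y) := (Nat.card_prod _ _).symm
    _ = Nat.card ((t : BisetTensor G H K X Y) × {p : X × Y // BisetTensor.mk p = t}) :=
        (Nat.card_congr (Equiv.sigmaFiberEquiv (BisetTensor.mk : X × Y → _))).symm
    _ = Nat.card ((_ : BisetTensor G H K X Y) × H) :=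
        Nat.card_congr (Equiv.sigmaCongrRight fun t => (Equiv.ofBijective _ (hF t)).symm)
    _ = Nat.card (BisetTensor G H K X Y × H) := Nat.card_congr (Equiv.sigmaEquivProd _ _)
    _ = Nat.card (BisetTensor G H K X Y) * Nat.card H := Nat.card_prod _ _

/-- If `X` is right-`H`-free then `|H|` divides `|X|`. -/
theorem card_dvd_of_free {G H : Type} [Group G] [Group H] {X : Type}
    [MulAction (G × H) X] [Finite X]
    (hfree : ∀ (h : H) (x : X), ((1 : G), h) • x = x → h = 1) :
    Nat.card H ∣ Nat.card X := by
  letI : MulAction (H × G) PUnit.{1} := { one_smul := fun e => rfl, mul_smul := fun _ _ _ => rfl }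
  have h0 := tensor_card (K := G) (Y := PUnit.{1}) hfree
  have h1 : Nat.card PUnit.{1} = 1 := Nat.card_unique
  rw [h1, mul_one] at h0
  exact ⟨_, h0.trans (mul_comm _ _)⟩

/-- A point of a bifree biset fixed by a "graph" of elements gives an injective
homomorphism. -/
theorem exists_injective_hom {G H W : Type} [Group G] [Group H] [MulAction (G × H) W]
    (hb : IsBifree G H W) (w : W) (hw : ∀ g : G, ∃ h : H, (g, h) • w = w) :
    ∃ f : G →* H, Function.Injective f := by
  choose f hf using hw
  have uniq : ∀ (g : G) (h : H), (g, h) • w = w → h = f g := by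
    intro g h hh
    have h1 : ((1 : G), (f g)⁻¹ * h) • w = w := by
      have := congrArg (fun z => (((g : G), f g)⁻¹ : G × H) • z) (hh.trans (hf g).symm)
      simpa [smul_smul, Prod.inv_mk, Prod.mk_mul_mk, Prod.mk_one_one] using this
    have := hb.2 _ _ h1
    rwa [inv_mul_eq_one, eq_comm] at this
  have hmul : ∀ a b : G, f (a * b) = f a * f b := by
    intro a b
    refine (uniq (a * b) (f a * f b) ?_).symm
    have : (((a, f a) : G × H) * (b, f b)) • w = w := by
      rw [mul_smul, hf b, hf a]
    simpa [Prod.mk_mul_mk] using this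
  refine ⟨MonoidHom.mk' f hmul, ?_⟩
  rw [injective_iff_map_eq_one]
  intro a ha
  have ha' : f a = 1 := ha
  have := hf a
  rw [ha'] at this
  exact hb.1 a w this

section Forward

variable {G H : Type} [Group G] [Group H]

/-- The group `G` as a `(G,H)`-biset twisted by a homomorphism `φ : H →* G`:
`(g,h) • x = g * x * (φ h)⁻¹`. -/
structure TwB (G H : Type) [Group G] [Group H] (φ : H →* G) : Type where
  /-- underlying element -/
  val : G

namespace TwB

variable (φ : H →* G)

instance : SMul (G × H) (TwB G H φ) := ⟨fun p x => ⟨p.1 * x.val * (φ p.2)⁻¹⟩⟩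

theorem smul_def (p : G × H) (x : TwB G H φ) : p • x = ⟨p.1 * x.val * (φ p.2)⁻¹⟩ := rfl

instance : MulAction (G × H) (TwB G H φ) where
  one_smul x := by cases x; simp [smul_def]
  mul_smul p q x := by
    cases x
    simp [smul_def, Prod.fst_mul, Prod.snd_mul, map_mul, mul_inv_rev, mul_assoc]

instance [Finite G] : Finite (TwB G H φ) :=
  Finite.of_equiv G ⟨fun g => ⟨g⟩, fun x => x.val, fun _ => rfl, fun _ => rfl⟩

theorem op_smul_def {φ : H →* G} (p : H × G) (x : BisetOp H G (TwB G H φ)) :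
    p • x = ((p.2, p.1) : G × H) • (show TwB G H φ from x) := rfl

end TwB

theorem twB_bifree (φ : H ≃* G) : IsBifree G H (TwB G H φ.toMonoidHom) := by
  constructor
  · intro g x hx
    have h1 : g * x.val * (φ.toMonoidHom (1 : H))⁻¹ = x.val := congrArg TwB.val hx
    simp only [map_one, inv_one, mul_one] at h1
    exact mul_eq_right.mp h1
  · intro h x hx
    have h1 : (1 : G) * x.val * (φ.toMonoidHom h)⁻¹ = x.val := congrArg TwB.val hx
    simp only [one_mul] at h1
    have h2 : (φ.toMonoidHom h)⁻¹ = 1 := mul_eq_left.mp h1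
    rw [inv_eq_one] at h2
    exact φ.injective (by simpa using h2)

theorem twB_tensor_equiv (φ : H ≃* G) :
    ∃ e₁ : BisetTensor G H G (TwB G H φ.toMonoidHom)
        (BisetOp H G (TwB G H φ.toMonoidHom)) ≃ BisetGrp G,
      ∀ (m : G × G) t, e₁ (m • t) = m • e₁ t := by
  set X := TwB G H φ.toMonoidHom with hX
  let f : X × BisetOp H G X → BisetGrp G := fun p => ⟨p.1.val * (show X from p.2).val⁻¹⟩
  have hwd : ∀ p q : X × BisetOp H G X,
      (bisetSetoid G H G X (BisetOp H G X)).r p q → f p = f q := by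
    rintro p q ⟨h, h1, h2⟩
    have e1 : q.1.val = 1 * p.1.val * (φ.toMonoidHom h)⁻¹ := by rw [h1]; rfl
    have e2 : (show X from q.2).val = 1 * (show X from p.2).val * (φ.toMonoidHom h)⁻¹ := by
      rw [h2]; rfl
    show (⟨p.1.val * (show X from p.2).val⁻¹⟩ : BisetGrp G) = ⟨q.1.val * (show X from q.2).val⁻¹⟩
    rw [e1, e2]
    refine congrArg BisetGrp.mk ?_
    simp [mul_inv_rev, mul_assoc]
  have hlift : ∀ p : X × BisetOp H G X,
      Quotient.lift f hwd (BisetTensor.mk p) = f p := fun _ => rfl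
  refine ⟨{
    toFun := Quotient.lift f hwd
    invFun := fun g => BisetTensor.mk (⟨g.val⟩, (show BisetOp H G X from ⟨1⟩))
    left_inv := ?_
    right_inv := ?_ }, ?_⟩
  · intro t
    refine Quotient.inductionOn t fun p => ?_
    refine Quotient.sound ?_
    refine ⟨φ.symm ((show X from p.2).val⁻¹), ?_, ?_⟩
    · show p.1 = (⟨1 * (p.1.val * (show X from p.2).val⁻¹) *
        (φ.toMonoidHom (φ.symm ((show X from p.2).val⁻¹)))⁻¹⟩ : X)
      refine (congrArg TwB.mk ?_ : (⟨p.1.val⟩ : X) = _)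
      simp [mul_assoc]
    · show (show X from p.2) = (⟨1 * 1 * (φ.toMonoidHom (φ.symm ((show X from p.2).val⁻¹)))⁻¹⟩ : X)
      refine (congrArg TwB.mk ?_ : (⟨(show X from p.2).val⟩ : X) = _)
      rw [one_mul, one_mul, MulEquiv.coe_toMonoidHom, MulEquiv.apply_symm_apply, inv_inv]
  · intro g
    show f (⟨g.val⟩, (show BisetOp H G X from ⟨1⟩)) = g
    show (⟨g.val * (1 : G)⁻¹⟩ : BisetGrp G) = g
    have hg : g.val * (1 : G)⁻¹ = g.val := by rw [inv_one, mul_one]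
    exact congrArg BisetGrp.mk hg
  · intro m t
    refine Quotient.inductionOn t fun p => ?_
    have h1 : m • (BisetTensor.mk p : BisetTensor G H G X (BisetOp H G X)) =
        BisetTensor.mk ((m.1, (1 : H)) • p.1, ((1 : H), m.2) • p.2) :=
      BisetTensor.smul_mk m p
    show Quotient.lift f hwd (m • BisetTensor.mk p) = m • Quotient.lift f hwd (BisetTensor.mk p)
    show Quotient.lift f hwd (BisetTensor.mk ((m.1, (1 : H)) • p.1, ((1 : H), m.2) • p.2)) = m • f p
    show (⟨(m.1 * p.1.val * (φ.toMonoidHom (1 : H))⁻¹) *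
        (m.2 * (show X from p.2).val * (φ.toMonoidHom (1 : H))⁻¹)⁻¹⟩ : BisetGrp G) =
      m • ⟨p.1.val * (show X from p.2).val⁻¹⟩
    rw [BisetGrp.smul_def]
    refine congrArg BisetGrp.mk ?_
    simp [mul_inv_rev, mul_assoc]

theorem twB_orth (φ : H ≃* G) :
    IsOrthogonalPair G H (TwB G H φ.toMonoidHom) Empty := by
  set X := TwB G H φ.toMonoidHom with hX
  haveI h2 : IsEmpty (BisetTensor G H G Empty (BisetOp H G Empty)) :=
    ⟨fun t => Quotient.inductionOn t fun p => p.1.elim⟩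
  haveI h3 : IsEmpty (BisetTensor G H G X (BisetOp H G Empty)) :=
    ⟨fun t => Quotient.inductionOn t fun p => (show Empty from p.2).elim⟩
  haveI h4 : IsEmpty (BisetTensor G H G Empty (BisetOp H G X)) :=
    ⟨fun t => Quotient.inductionOn t fun p => p.1.elim⟩
  obtain ⟨e₁, he₁⟩ := twB_tensor_equiv φ
  refine ⟨Equiv.sumCongr e₁ (Equiv.equivOfIsEmpty _ _), ?_⟩
  intro m z
  cases z with
  | inl t =>
    rw [Sum.smul_inl]
    simp only [Equiv.sumCongr_apply, Sum.map_inl]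
    rw [Sum.smul_inl]
    exact congrArg Sum.inl (he₁ m t)
  | inr t => exact isEmptyElim t

end Forward

end AuxProof

/-- there exists an orthogonal pair of finite bifree `(G,H)`-bisets if and
only if `G` and `H` are isomorphic (i.e. `B°^Δ(G,H) ≠ ∅` iff `G ≅ H`). -/
theorem statement10 (G H : Type) [Group G] [Group H] [Finite G] [Finite H] :
    Nonempty (OrthPair G H) ↔ Nonempty (G ≃* H) := by
  constructor
  · rintro ⟨P⟩
    obtain ⟨e, he⟩ := P.orth
    -- a point fixed by the full diagonal of `G × G`
    have hs : ∀ g : G, ((g, g) : G × G) • e.symm (Sum.inl (⟨1⟩ : BisetGrp G)) =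
        e.symm (Sum.inl ⟨1⟩) := by
      intro g
      apply e.injective
      rw [he, Equiv.apply_symm_apply, Sum.smul_inl]
      refine congrArg Sum.inl ?_
      rw [BisetGrp.smul_def]
      exact congrArg BisetGrp.mk (by group)
    -- an injective homomorphism `G →* H`
    have hinj : ∃ f : G →* H, Function.Injective f := by
      rcases hsum : e.symm (Sum.inl (⟨1⟩ : BisetGrp G)) with t | t
      · obtain ⟨p, hp⟩ := Quotient.exists_rep t
        refine exists_injective_hom P.bifreeX p.1 fun g => ?_
        have h1 := hs g
        rw [hsum, Sum.smul_inl] at h1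
        have h2 : ((g, g) : G × G) • t = t := Sum.inl.inj h1
        rw [← hp] at h2
        have h2' : ((g, g) : G × G) •
            (BisetTensor.mk p : BisetTensor G H G P.X (BisetOp H G P.X)) = BisetTensor.mk p := h2
        have h3 := Quotient.exact ((BisetTensor.smul_mk ((g, g) : G × G) p).symm.trans h2')
        obtain ⟨h, hh1, _⟩ := h3
        refine ⟨h, ?_⟩
        have h4 : (((1 : G), h) : G × H) • ((g, (1 : H)) : G × H) • p.1 = p.1 := hh1.symm
        simpa [smul_smul, Prod.mk_mul_mk] using h4
      · obtain ⟨p, hp⟩ := Quotient.exists_rep t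
        refine exists_injective_hom P.bifreeY p.1 fun g => ?_
        have h1 := hs g
        rw [hsum, Sum.smul_inr] at h1
        have h2 : ((g, g) : G × G) • t = t := Sum.inr.inj h1
        rw [← hp] at h2
        have h2' : ((g, g) : G × G) •
            (BisetTensor.mk p : BisetTensor G H G P.Y (BisetOp H G P.Y)) = BisetTensor.mk p := h2
        have h3 := Quotient.exact ((BisetTensor.smul_mk ((g, g) : G × G) p).symm.trans h2')
        obtain ⟨h, hh1, _⟩ := h3
        refine ⟨h, ?_⟩
        have h4 : (((1 : G), h) : G × H) • ((g, (1 : H)) : G × H) • p.1 = p.1 := hh1.symm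
        simpa [smul_smul, Prod.mk_mul_mk] using h4
    -- cardinality count
    have hfx := P.bifreeX.2
    have hfy := P.bifreeY.2
    have h1 : Nat.card P.X * Nat.card P.X =
        Nat.card (BisetTensor G H G P.X (BisetOp H G P.X)) * Nat.card H :=
      tensor_card (K := G) (Y := BisetOp H G P.X) hfx
    have h2 : Nat.card P.Y * Nat.card P.Y =
        Nat.card (BisetTensor G H G P.Y (BisetOp H G P.Y)) * Nat.card H :=
      tensor_card (K := G) (Y := BisetOp H G P.Y) hfy
    have h3 : Nat.card P.X * Nat.card P.Y =
        Nat.card (BisetTensor G H G P.X (BisetOp H G P.Y)) * Nat.card H :=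
      tensor_card (K := G) (Y := BisetOp H G P.Y) hfx
    have h4 : Nat.card P.Y * Nat.card P.X =
        Nat.card (BisetTensor G H G P.Y (BisetOp H G P.X)) * Nat.card H :=
      tensor_card (K := G) (Y := BisetOp H G P.X) hfy
    have hgG : Nat.card (BisetGrp G) = Nat.card G :=
      Nat.card_congr ⟨fun x => x.val, fun g => ⟨g⟩, fun _ => rfl, fun _ => rfl⟩
    have hcard := Nat.card_congr e
    rw [Nat.card_sum, Nat.card_sum, Nat.card_sum, hgG] at hcard
    have key : ((Nat.card P.X : ℤ) - Nat.card P.Y) ^ 2 =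
        (Nat.card G : ℤ) * Nat.card H := by
      have e1 : ((Nat.card P.X : ℤ)) * Nat.card P.X =
          (Nat.card (BisetTensor G H G P.X (BisetOp H G P.X)) : ℤ) * Nat.card H := by
        exact_mod_cast h1
      have e2 : ((Nat.card P.Y : ℤ)) * Nat.card P.Y =
          (Nat.card (BisetTensor G H G P.Y (BisetOp H G P.Y)) : ℤ) * Nat.card H := by
        exact_mod_cast h2
      have e3 : ((Nat.card P.X : ℤ)) * Nat.card P.Y =
          (Nat.card (BisetTensor G H G P.X (BisetOp H G P.Y)) : ℤ) * Nat.card H := by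
        exact_mod_cast h3
      have e4 : ((Nat.card P.Y : ℤ)) * Nat.card P.X =
          (Nat.card (BisetTensor G H G P.Y (BisetOp H G P.X)) : ℤ) * Nat.card H := by
        exact_mod_cast h4
      have e5 : (Nat.card (BisetTensor G H G P.X (BisetOp H G P.X)) : ℤ) +
          Nat.card (BisetTensor G H G P.Y (BisetOp H G P.Y)) =
          (Nat.card G : ℤ) + (Nat.card (BisetTensor G H G P.X (BisetOp H G P.Y)) +
            Nat.card (BisetTensor G H G P.Y (BisetOp H G P.X))) := by
        exact_mod_cast hcard
      linear_combination e1 + e2 - e3 - e4 + (Nat.card H : ℤ) * e5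
    have hdx : Nat.card H ∣ Nat.card P.X := card_dvd_of_free hfx
    have hdy : Nat.card H ∣ Nat.card P.Y := card_dvd_of_free hfy
    have hdvd : (Nat.card H : ℤ) ∣ ((Nat.card P.X : ℤ) - Nat.card P.Y) :=
      dvd_sub (Int.natCast_dvd_natCast.mpr hdx) (Int.natCast_dvd_natCast.mpr hdy)
    have hne : (Nat.card H : ℤ) ≠ 0 := by exact_mod_cast Nat.card_pos.ne'
    have h6 : (Nat.card H : ℤ) * Nat.card H ∣ (Nat.card G : ℤ) * Nat.card H := by
      rw [← key, sq]
      exact mul_dvd_mul hdvd hdvd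
    have h7 : (Nat.card H : ℤ) ∣ (Nat.card G : ℤ) := (mul_dvd_mul_iff_right hne).mp h6
    have h8 : Nat.card H ∣ Nat.card G := Int.natCast_dvd_natCast.mp h7
    obtain ⟨f, hf⟩ := hinj
    have h9 : Nat.card G = Nat.card H :=
      le_antisymm (Nat.card_le_card_of_injective f hf) (Nat.le_of_dvd Nat.card_pos h8)
    exact ⟨MulEquiv.ofBijective f ((Nat.bijective_iff_injective_and_card f).mpr ⟨hf, h9⟩)⟩
  · rintro ⟨eGH⟩
    exact ⟨{ X := TwB G H eGH.symm.toMonoidHom, Y := Empty,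
             bifreeX := twB_bifree eGH.symm,
             bifreeY := ⟨fun g x _ => x.elim, fun h x _ => x.elim⟩,
             orth := twB_orth eGH.symm }⟩
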